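/- Let H be a finite set, p a prime, and G = ℤ/p^{α_1}ℤ ⊕ ... ⊕ ℤ/p^{α_r}ℤ. For any function φ : H → G, there exists a subset U ⊆ H with |U| ≤ Σ_{j=1}^r (p^{α_j} - 1) such that Σ_{h ∈ U} φ(h) = Σ_{h ∈ H} φ(h). -/

import Mathlib

open Finset

private abbrev OG (p : ℕ) {r : ℕ} (α : Fin r → ℕ) := ∀ j, ZMod (p ^ α j)
private abbrev OR (p : ℕ) {r : ℕ} (α : Fin r → ℕ) := AddMonoidAlgebra (ZMod p) (OG p α)

private lemma OR_charP (p : ℕ) [Fact p.Prime] {r : ℕ} (α : Fin r → ℕ) : CharP (OR p α) p := by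
  have h : Function.Injective (algebraMap (ZMod p) (OR p α)) := by
    rw [AddMonoidAlgebra.coe_algebraMap]
    intro a b hab
    simp only [Function.comp_apply] at hab
    have h2 := AddMonoidAlgebra.single_right_inj.mp hab
    simpa using h2
  exact charP_of_injective_algebraMap h p

private noncomputable def yy (p : ℕ) {r : ℕ} (α : Fin r → ℕ) (j : Fin r) : OR p α :=
  AddMonoidAlgebra.single (Pi.single j 1) 1 - 1

private lemma yy_pow (p : ℕ) [Fact p.Prime] {r : ℕ} (α : Fin r → ℕ) (j : Fin r) :
    yy p α j ^ (p ^ α j) = 0 := by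
  haveI := OR_charP p α
  have h1 : (p ^ α j) • (Pi.single j 1 : OG p α) = 0 := by
    rw [← Pi.single_smul, nsmul_eq_mul, mul_one, ZMod.natCast_self, Pi.single_zero]
  rw [yy, sub_pow_char_pow, AddMonoidAlgebra.single_pow, h1]
  simp [← AddMonoidAlgebra.one_def]

private lemma single_sub_one_mem (p : ℕ) [Fact p.Prime] {r : ℕ} (α : Fin r → ℕ) (g : OG p α) :
    AddMonoidAlgebra.single g (1 : ZMod p) - 1 ∈ Ideal.span (Set.range (yy p α)) := by
  set I := Ideal.span (Set.range (yy p α)) with hI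
  set q := Ideal.Quotient.mk I with hq
  have hqj : ∀ j, q (AddMonoidAlgebra.single (Pi.single j 1 : OG p α) (1 : ZMod p)) = 1 := by
    intro j
    have h0 : q (yy p α j) = 0 :=
      Ideal.Quotient.eq_zero_iff_mem.mpr (Ideal.subset_span ⟨j, rfl⟩)
    rw [yy, map_sub, map_one, sub_eq_zero] at h0
    exact h0
  have hg : AddMonoidAlgebra.single g (1 : ZMod p) =
      ∏ j, (AddMonoidAlgebra.single (Pi.single j (1 : ZMod (p ^ α j)) : OG p α) (1 : ZMod p)) ^ (g j).val := by
    have : ∀ j : Fin r,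
        (AddMonoidAlgebra.single (Pi.single j (1 : ZMod (p ^ α j)) : OG p α) (1 : ZMod p)) ^ (g j).val
        = AddMonoidAlgebra.single (Pi.single j (g j) : OG p α) (1 : ZMod p) := by
      intro j
      haveI : NeZero (p ^ α j) := ⟨pow_ne_zero _ (Fact.out : p.Prime).ne_zero⟩
      rw [AddMonoidAlgebra.single_pow, one_pow, ← Pi.single_smul, nsmul_eq_mul, mul_one,
        ZMod.natCast_rightInverse (g j)]
    rw [Finset.prod_congr rfl (fun j _ => this j), AddMonoidAlgebra.prod_single,
      Finset.prod_const_one, Finset.univ_sum_single]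
  rw [← Ideal.Quotient.eq_zero_iff_mem, map_sub, map_one, hg, map_prod, sub_eq_zero]
  simp only [map_pow, ← hq, hqj, one_pow, Finset.prod_const_one]

private lemma davenport {H : Type*} [Fintype H] [DecidableEq H]
    (p : ℕ) [Fact p.Prime] {r : ℕ} (α : Fin r → ℕ)
    (φ : H → OG p α)
    (hcard : ∑ j, (p ^ α j - 1) < Fintype.card H) :
    ∃ S : Finset H, S.Nonempty ∧ ∑ h ∈ S, φ h = 0 := by
  by_contra hno
  push_neg at hno
  have key : ∏ h, (AddMonoidAlgebra.single (φ h) (1 : ZMod p) - 1) = (0 : OR p α) := by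
    choose c hc using fun h : H =>
      (Submodule.mem_span_range_iff_exists_fun (OR p α)).mp (single_sub_one_mem p α (φ h))
    have step1 : ∏ h, (AddMonoidAlgebra.single (φ h) (1 : ZMod p) - 1)
        = ∏ h, ∑ j, c h j * yy p α j := by
      refine Finset.prod_congr rfl fun h _ => ?_
      rw [← hc h]
      rfl
    rw [step1, Finset.prod_univ_sum (fun _ => (univ : Finset (Fin r)))]
    refine Finset.sum_eq_zero fun f _ => ?_
    have hpig : ∃ j, p ^ α j ≤ (univ.filter fun h => f h = j).card := by
      by_contra hj
      push_neg at hj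
      have : Fintype.card H ≤ ∑ j, (p ^ α j - 1) := by
        rw [← Finset.card_univ,
          Finset.card_eq_sum_card_fiberwise (f := f) (t := univ) (fun x _ => mem_univ _)]
        exact Finset.sum_le_sum fun j _ => Nat.le_sub_one_of_lt (hj j)
      omega
    obtain ⟨j, hj⟩ := hpig
    have hzero : ∏ h, yy p α (f h) = 0 := by
      rw [← Finset.prod_filter_mul_prod_filter_not univ (fun h => f h = j)]
      have h1 : ∏ h ∈ univ.filter (fun h => f h = j), yy p α (f h)
          = yy p α j ^ (univ.filter fun h => f h = j).card := by
        rw [Finset.prod_congr rfl fun h hh => by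
          rw [(Finset.mem_filter.mp hh).2], Finset.prod_const]
      rw [h1, pow_eq_zero_of_le hj (yy_pow p α j), zero_mul]
    rw [Finset.prod_mul_distrib, hzero, mul_zero]
  have expand : ∏ h, (AddMonoidAlgebra.single (φ h) (1 : ZMod p) - 1)
      = ∑ S ∈ (univ : Finset H).powerset,
          AddMonoidAlgebra.single (∑ h ∈ S, φ h) ((-1 : ZMod p) ^ (univ \ S).card) := by
    have hsub : ∀ h : H, AddMonoidAlgebra.single (φ h) (1 : ZMod p) - 1
        = AddMonoidAlgebra.single (φ h) (1 : ZMod p) + (-1) := by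
      intro h; rw [sub_eq_add_neg]
    rw [Finset.prod_congr rfl fun h _ => hsub h,
      Finset.prod_add (fun h => AddMonoidAlgebra.single (φ h) (1 : ZMod p)) (fun _ => (-1 : OR p α)) univ]
    refine Finset.sum_congr rfl fun S _ => ?_
    rw [AddMonoidAlgebra.prod_single, Finset.prod_const_one, Finset.prod_const]
    have hneg : (-1 : OR p α) = AddMonoidAlgebra.single (0 : OG p α) (-1 : ZMod p) := by
      rw [AddMonoidAlgebra.one_def]; exact (AddMonoidAlgebra.single_neg _ _).symm
    rw [hneg, AddMonoidAlgebra.single_pow, AddMonoidAlgebra.single_mul_single, smul_zero,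
      add_zero, one_mul]
  have hev := congrArg (fun x : OR p α => Finsupp.applyAddHom (0 : OG p α) x.coeff) (expand.symm.trans key)
  simp only [AddMonoidAlgebra.coeff_sum, AddMonoidAlgebra.coeff_zero, map_sum, map_zero] at hev
  simp only [AddMonoidAlgebra.coeff_single, Finsupp.applyAddHom_apply, Finsupp.single_apply] at hev
  rw [Finset.sum_eq_single_of_mem (∅ : Finset H)
    (Finset.mem_powerset.mpr (Finset.empty_subset _))
    (fun S _ hS => by
      rw [if_neg]
      exact fun h0 => hno S (Finset.nonempty_of_ne_empty hS) h0)] at hev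
  rw [Finset.sum_empty, if_pos rfl] at hev
  exact (IsUnit.pow _ isUnit_one.neg).ne_zero hev

/-- The `k = 1` case (Olson's theorem form): for `φ : H → ℤ/p^{α₁}ℤ ⊕ ⋯ ⊕ ℤ/p^{α_r}ℤ`
there is `U ⊆ H` with `|U| ≤ ∑ (p^{αⱼ}-1)` and `∑_{h ∈ U} φ(h) = ∑_{h ∈ H} φ(h)`. -/
theorem additive_k_one {H : Type*} [Fintype H] [DecidableEq H]
    (p : ℕ) (hp : p.Prime) (r : ℕ) (α : Fin r → ℕ) (hα : ∀ j, 0 < α j)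
    (φ : H → (∀ j, ZMod (p ^ α j))) :
    ∃ U : Finset H, U.card ≤ ∑ j, (p ^ α j - 1) ∧
      ∑ h ∈ U, φ h = ∑ h, φ h := by
  haveI : Fact p.Prime := ⟨hp⟩
  suffices h : ∀ T : Finset H, ∃ U, U ⊆ T ∧ U.card ≤ ∑ j, (p ^ α j - 1) ∧
      ∑ h ∈ U, φ h = ∑ h ∈ T, φ h by
    obtain ⟨U, _, h1, h2⟩ := h univ
    exact ⟨U, h1, h2⟩
  intro T
  induction T using Finset.strongInduction with
  | _ T ih =>
    by_cases hT : T.card ≤ ∑ j, (p ^ α j - 1)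
    · exact ⟨T, Finset.Subset.refl T, hT, rfl⟩
    · have hc : ∑ j, (p ^ α j - 1) < Fintype.card T := by
        rw [Fintype.card_coe]; omega
      obtain ⟨S, hSne, hS0⟩ := davenport p α (fun h : T => φ h) hc
      set S' := S.image Subtype.val with hS'
      have hS'sub : S' ⊆ T := by
        intro x hx
        obtain ⟨y, _, rfl⟩ := Finset.mem_image.mp hx
        exact y.2
      have hS'ne : S'.Nonempty := hSne.image _
      have hS'0 : ∑ h ∈ S', φ h = 0 := by
        rw [hS', Finset.sum_image (fun a _ b _ h => Subtype.val_injective h)]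
        exact hS0
      have hlt : T \ S' ⊂ T := Finset.sdiff_ssubset hS'sub hS'ne
      obtain ⟨U, hUsub, hUcard, hUsum⟩ := ih _ hlt
      refine ⟨U, hUsub.trans Finset.sdiff_subset, hUcard, ?_⟩
      rw [hUsum, Finset.sum_sdiff_eq_sub hS'sub, hS'0, sub_zero]
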